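/- For t ∈ ω^{<ω} define Σ^t_k := Σ_{j<k}(t(j)+2) and K_t := {α ∈ 2^ω : ∀k<|t|, (α)_{Σ^t_k} = (w_{t(k)})₀·0^{t(k)+1−|(w_{t(k)})₀|}·1·0^∞ and ∀0<i<t(k)+2, (α)_{Σ^t_k+i} = (w_{t(k)})_i·0^∞}, where w_n := s_n·0 and (α)_m is the m-th vertical slice under the pairing ⟨·,·⟩. Then for distinct n, the sets K_{t⌢n} are pairwise disjoint, each K_{t⌢n} ⊆ K_t, and each K_{t⌢n} is nowhere dense (meager) in K^{w_n(0)}_t := {α ∈ K_t : α(⟨Σ^t_{|t|},0⟩) = w_n(0)}. -/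
import Mathlib


/-- Triangular numbers. -/
def tri (m : ℕ) : ℕ := m * (m + 1) / 2

/-- The pairing `⟨n,p⟩ := (Σ_{k ≤ n+p} k) + p`. -/
def pairN (n p : ℕ) : ℕ := tri (n + p) + p

/-- `Σ^t_k := Σ_{j<k} (t(j) + 2)`. -/
def sigT (t : List ℕ) (k : ℕ) : ℕ := ((t.take k).map (· + 2)).sum

/-- The set `K_t ⊆ 2^ω`: for each `k < |t|`, the vertical slices numbered
`Σ^t_k, …, Σ^t_k + t(k) + 1` are prescribed: the `i`-th of them is
`(w_{t(k)})_i · 0^∞`, except that the `0`-th one additionally carries a `1`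
at position `t(k) + 1` (i.e. equals `(w_{t(k)})₀·0^{t(k)+1-|(w_{t(k)})₀|}·1·0^∞`). -/
def Kt (w : ℕ → List Bool) (t : List ℕ) : Set (ℕ → Bool) :=
  {α | ∀ k < t.length, ∀ i < t.getD k 0 + 2, ∀ p,
    α (pairN (sigT t k + i) p) =
      if i = 0 ∧ p = t.getD k 0 + 1 then true
      else (w (t.getD k 0)).getD (pairN i p) false}

/-- The clopen piece `K^ε_t := {α ∈ K_t : α(⟨Σ^t_{|t|}, 0⟩) = ε}`. -/
def Keps (w : ℕ → List Bool) (t : List ℕ) (ε : Bool) : Set (ℕ → Bool) :=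
  {α | α ∈ Kt w t ∧ α (pairN (sigT t t.length) 0) = ε}

open Topology Filter

lemma tri_succ (n : ℕ) : tri (n+1) = tri n + n + 1 := by
  unfold tri
  have h : (n+1)*(n+1+1) = n*(n+1) + 2*(n+1) := by ring
  rw [h]; omega

lemma tri_mono : Monotone tri :=
  monotone_nat_of_le_succ fun n => by rw [tri_succ]; omega

lemma pairN_lt {a b c d : ℕ} (h : a + b < c + d) : pairN a b < pairN c d := by
  have h1 : tri (a+b+1) = tri (a+b) + (a+b) + 1 := tri_succ _
  have h2 : tri (a+b+1) ≤ tri (c+d) := tri_mono h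
  unfold pairN; omega

lemma pairN_inj {a b c d : ℕ} (h : pairN a b = pairN c d) : a = c ∧ b = d := by
  rcases lt_trichotomy (a+b) (c+d) with h'|h'|h'
  · exact absurd h (ne_of_lt (pairN_lt h'))
  · unfold pairN at h; rw [h'] at h; omega
  · exact absurd h.symm (ne_of_lt (pairN_lt h'))

lemma pairN_ge (a b : ℕ) : b ≤ pairN a b := by unfold pairN; omega

lemma sigT_append (t : List ℕ) (n k : ℕ) (hk : k ≤ t.length) :
    sigT (t ++ [n]) k = sigT t k := by
  unfold sigT; rw [List.take_append_of_le_length hk]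

lemma sigT_succ (t : List ℕ) (k : ℕ) (hk : k < t.length) :
    sigT t (k+1) = sigT t k + (t.getD k 0 + 2) := by
  unfold sigT
  rw [List.take_succ, List.map_append, List.sum_append]
  simp [List.getElem?_eq_getElem hk, List.getD_eq_getElem?_getD]

lemma sigT_mono (t : List ℕ) : Monotone (sigT t) :=
  monotone_nat_of_le_succ fun k => by
    unfold sigT
    rw [List.take_succ, List.map_append, List.sum_append]
    exact Nat.le_add_right _ _

lemma getD_append_lt (t : List ℕ) (n k : ℕ) (hk : k < t.length) :
    (t ++ [n]).getD k 0 = t.getD k 0 := by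
  rw [List.getD_eq_getElem?_getD, List.getD_eq_getElem?_getD,
    List.getElem?_append_left hk]

lemma getD_append_len (t : List ℕ) (n : ℕ) :
    (t ++ [n]).getD t.length 0 = n := by
  rw [List.getD_eq_getElem?_getD, List.getElem?_concat_length]; rfl

lemma isClosed_Kt (w : ℕ → List Bool) (s : List ℕ) : IsClosed (Kt w s) := by
  have h : Kt w s = ⋂ (k : ℕ) (_ : k < s.length) (i : ℕ)
      (_ : i < s.getD k 0 + 2) (p : ℕ),
      {α : ℕ → Bool | α (pairN (sigT s k + i) p) =
        if i = 0 ∧ p = s.getD k 0 + 1 then true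
        else (w (s.getD k 0)).getD (pairN i p) false} := by
    ext α; simp [Kt]
  rw [h]
  exact isClosed_iInter fun k => isClosed_iInter fun _ =>
    isClosed_iInter fun i => isClosed_iInter fun _ =>
    isClosed_iInter fun p => isClosed_eq (continuous_apply _) continuous_const

/-- For `n < m`, an element of `K_{t⌢n}` is not in `K_{t⌢m}`. -/
lemma disj_aux (w : ℕ → List Bool) (hw : ∀ n, (w n).length = n + 1)
    (t : List ℕ) {n m : ℕ} (hnm : n < m) {α : ℕ → Bool}
    (hn : α ∈ Kt w (t ++ [n])) (hm : α ∈ Kt w (t ++ [m])) : False := by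
  have hlen : ∀ j : ℕ, t.length < (t ++ [j]).length := by simp
  have h1 := hn t.length (hlen n) 0 (by omega) (m + 1)
  have h2 := hm t.length (hlen m) 0 (by omega) (m + 1)
  rw [getD_append_len] at h1 h2
  rw [sigT_append t n t.length le_rfl] at h1
  rw [sigT_append t m t.length le_rfl] at h2
  rw [if_pos ⟨rfl, rfl⟩] at h2
  rw [if_neg (by omega)] at h1
  have hout : (w n).length ≤ pairN 0 (m + 1) := by
    have := pairN_ge 0 (m + 1); rw [hw n]; omega
  rw [List.getD_eq_default _ _ hout] at h1
  rw [h1] at h2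
  exact Bool.false_ne_true h2


/-- the `K_{t⌢n}` are pairwise disjoint, included in `K_t`, and each
`K_{t⌢n}` is nowhere dense in the subspace `K^{w_n(0)}_t`. -/
theorem stmt13 (w : ℕ → List Bool) (hw : ∀ n, (w n).length = n + 1) (t : List ℕ) :
    (∀ n m : ℕ, n ≠ m → Disjoint (Kt w (t ++ [n])) (Kt w (t ++ [m]))) ∧
    (∀ n : ℕ, Kt w (t ++ [n]) ⊆ Kt w t) ∧
    (∀ n : ℕ, IsNowhereDense
      ((fun x : ↥(Keps w t ((w n).getD 0 false)) => (x : ℕ → Bool)) ⁻¹'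
        Kt w (t ++ [n]))) := by
  refine ⟨?_, ?_, ?_⟩
  · intro n m hnm
    rw [Set.disjoint_left]
    intro α hαn hαm
    rcases lt_or_gt_of_ne hnm with h | h
    · exact disj_aux w hw t h hαn hαm
    · exact disj_aux w hw t h hαm hαn
  · intro n α hα k hk i hi p
    have hk' : k < (t ++ [n]).length := by simp; omega
    have := hα k hk' i (by rwa [getD_append_lt t n k hk]) p
    rwa [getD_append_lt t n k hk, sigT_append t n k hk.le] at this
  · intro n
    set ε := (w n).getD 0 false with hε
    set S := ((fun x : ↥(Keps w t ε) => (x : ℕ → Bool)) ⁻¹' Kt w (t ++ [n])) with hS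
    have hclosed : IsClosed S :=
      (isClosed_Kt w (t ++ [n])).preimage continuous_subtype_val
    rw [IsNowhereDense, hclosed.closure_eq]
    rw [Set.eq_empty_iff_forall_notMem]
    intro x hx
    have hSx : S ∈ 𝓝 x := mem_interior_iff_mem_nhds.mp hx
    rw [nhds_subtype] at hSx
    obtain ⟨V, hV, hVS⟩ := Filter.mem_comap.mp hSx
    rw [nhds_pi] at hV
    obtain ⟨I, hIfin, s, hs, hpi⟩ := Filter.mem_pi.mp hV
    have hsx : ∀ i, (x : ℕ → Bool) i ∈ s i := by
      intro i
      have := hs i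
      rw [nhds_discrete] at this
      exact this
    obtain ⟨N, hN⟩ := hIfin.bddAbove
    set σ := sigT t t.length with hσ
    set p := N + n + 2 with hp
    set c := pairN σ p with hc
    set β := Function.update (x : ℕ → Bool) c true with hβ
    have hcI : ∀ i ∈ I, i ≠ c := by
      intro i hi
      have h1 : i ≤ N := hN hi
      have h2 : p ≤ c := pairN_ge σ p
      omega
    have hne : ∀ a b : ℕ, a < σ → pairN a b ≠ c := by
      intro a b ha heq
      have := (pairN_inj heq).1
      omega
    have hβval : ∀ j, j ≠ c → β j = (x : ℕ → Bool) j := by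
      intro j hj; exact Function.update_of_ne hj _ _
    have hβKeps : β ∈ Keps w t ε := by
      constructor
      · intro k hk i hi q
        have hlt : sigT t k + i < σ := by
          have h1 : sigT t k + i < sigT t (k + 1) := by
            rw [sigT_succ t k hk]; omega
          have h2 : sigT t (k + 1) ≤ σ := sigT_mono t hk
          omega
        rw [hβval _ (hne _ _ hlt)]
        exact x.2.1 k hk i hi q
      · have h0 : pairN σ 0 ≠ c := by
          intro heq
          have := (pairN_inj heq).2
          omega
        rw [hβval _ h0]
        exact x.2.2
    have hβV : β ∈ V := by
      apply hpi
      intro i hi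
      rw [hβval i (hcI i hi)]
      exact hsx i
    have hβS : (⟨β, hβKeps⟩ : ↥(Keps w t ε)) ∈ S := hVS hβV
    have hβKt : β ∈ Kt w (t ++ [n]) := hβS
    have hlen : t.length < (t ++ [n]).length := by simp
    have h1 := hβKt t.length hlen 0 (by omega) p
    rw [getD_append_len, sigT_append t n t.length le_rfl] at h1
    rw [if_neg (by omega)] at h1
    have hout : (w n).length ≤ pairN 0 p := by
      have := pairN_ge 0 p; rw [hw n]; omega
    rw [List.getD_eq_default _ _ hout] at h1
    simp only [Nat.add_zero] at h1
    rw [← hc, hβ, Function.update_self] at h1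
    simp at h1
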